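/- Define g(ν) = ν·( (1/2) log 5 − f(ν) ) where f(ν) = sup_{2/(ν+1) ≤ b ≤ 1} κ(bν, 1−b). Then g(ν) > (1/2) log(9/5) for every ν ≥ 1. -/
import Mathlib


noncomputable def fab (a b : ℝ) (p : ℝ × ℝ) : ℝ :=
  b * Real.log b - 2 * p.1 * Real.log p.1
    + ((a + 1 - b) / 2) * Real.log ((a + 1 - b) / 2)
    - ((a + 1 - b) / 2 - p.1) * Real.log ((a + 1 - b) / 2 - p.1)
    - 2 * p.2 * Real.log p.2
    - (b - p.1 - p.2) * Real.log (b - p.1 - p.2)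
    + ((a - 1 - b) / 2) * Real.log ((a - 1 - b) / 2)
    - ((a - 1 - b) / 2 - p.2) * Real.log ((a - 1 - b) / 2 - p.2)

/-- The domain `D_{a,b}` of `f_{a,b}`. -/
def Dab (a b : ℝ) : Set (ℝ × ℝ) :=
  {p | 0 ≤ p.1 ∧ 0 ≤ p.2 ∧ p.1 + p.2 ≤ b ∧ p.1 ≤ (a + 1 - b) / 2 ∧ p.2 ≤ (a - 1 - b) / 2}

/-- The entropy per step `κ(a,b) = (1/a) · sup_{(δ,ε) ∈ D_{a,b}} f_{a,b}(δ,ε)`. -/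
noncomputable def kappa (a b : ℝ) : ℝ := (1 / a) * sSup (fab a b '' Dab a b)

/-- `f(ν) = sup_{2/(ν+1) ≤ b ≤ 1} κ(bν, 1−b)`. -/
noncomputable def fnu (ν : ℝ) : ℝ :=
  sSup ((fun b : ℝ => kappa (b * ν) (1 - b)) '' Set.Icc (2 / (ν + 1)) 1)

/-- `g(ν) = ν·((1/2) log 5 − f(ν))`. -/
noncomputable def gnu (ν : ℝ) : ℝ := ν * ((1 / 2) * Real.log 5 - fnu ν)


lemma log_ge {u : ℝ} (hu : 0 < u) : 1 - 1/u ≤ Real.log u := by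
  have h := Real.log_le_sub_one_of_pos (show (0:ℝ) < 1/u by positivity)
  rw [one_div, Real.log_inv] at h
  have : (1:ℝ)/u = u⁻¹ := one_div u
  rw [this]
  linarith

lemma K_ge {t r : ℝ} (ht : 0 ≤ t) (hr : 0 < r) :
    t - r ≤ t * (Real.log t - Real.log r) := by
  rcases ht.eq_or_lt with h | h
  · rw [← h]; simp; linarith
  · have h1 : Real.log t - Real.log r = Real.log (t/r) := (Real.log_div h.ne' hr.ne').symm
    have h2 := log_ge (show 0 < t/r by positivity)
    have h3 : 1 - 1/(t/r) = 1 - r/t := by field_simp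
    rw [h1]
    calc t - r = t * (1 - r/t) := by field_simp
    _ ≤ t * Real.log (t/r) := by
        apply mul_le_mul_of_nonneg_left _ h.le
        rw [← h3]; exact h2

lemma K_gap {t r S : ℝ} (hr : 0 < r) (hrt : r ≤ t) (hS : t + r ≤ S) :
    (t - r) + (t - r)^2/(2*S) ≤ t * (Real.log t - Real.log r) := by
  have ht : 0 < t := lt_of_lt_of_le hr hrt
  have hS0 : 0 < S := by linarith
  set p := Real.sqrt t with hp
  set q := Real.sqrt r with hq
  have hp2 : p^2 = t := Real.sq_sqrt ht.le
  have hq2 : q^2 = r := Real.sq_sqrt hr.le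
  have hp0 : 0 < p := Real.sqrt_pos.mpr ht
  have hq0 : 0 < q := Real.sqrt_pos.mpr hr
  have hlog : Real.log t - Real.log r = 2 * (Real.log p - Real.log q) := by
    rw [hp, hq, Real.log_sqrt ht.le, Real.log_sqrt hr.le]; ring
  have h1 : 1 - q/p ≤ Real.log p - Real.log q := by
    have h2 := log_ge (show 0 < p/q by positivity)
    rw [Real.log_div hp0.ne' hq0.ne'] at h2
    have hh : 1/(p/q) = q/p := by field_simp
    rw [hh] at h2; exact h2
  have h4 : 2*t - 2*(p*q) ≤ t * (Real.log t - Real.log r) := by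
    rw [hlog]
    have hmul := mul_le_mul_of_nonneg_left h1 (by linarith : (0:ℝ) ≤ 2*t)
    have he : 2*t*(1 - q/p) = 2*t - 2*(p*q) := by
      field_simp
      nlinarith [hp2]
    calc 2*t - 2*(p*q) = 2*t*(1 - q/p) := he.symm
    _ ≤ 2*t*(Real.log p - Real.log q) := hmul
    _ = t * (2*(Real.log p - Real.log q)) := by ring
  have h6 : (p+q)^2 ≤ 2*S := by nlinarith [sq_nonneg (p-q)]
  have h7 : (t - r)^2 = (p-q)^2 * (p+q)^2 := by rw [← hp2, ← hq2]; ring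
  have h5 : (t - r)^2/(2*S) ≤ (p - q)^2 := by
    rw [div_le_iff₀ (by linarith : (0:ℝ) < 2*S)]
    calc (t-r)^2 = (p-q)^2 * (p+q)^2 := h7
    _ ≤ (p-q)^2 * (2*S) := mul_le_mul_of_nonneg_left h6 (sq_nonneg _)
  nlinarith [h4, h5, hp2, hq2]

lemma pair_nonneg (c d y ε : ℝ) (hc : 0 < c) (hd : 0 < d) (hcd : c + d = 1)
    (hy : 0 ≤ y) (hε : 0 ≤ ε) (hεy : ε ≤ y) :
    0 ≤ ε * (Real.log ε - Real.log (c*y)) + (y - ε) * (Real.log (y-ε) - Real.log (d*y)) := by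
  rcases hy.eq_or_lt with h | h
  · have hε0 : ε = 0 := le_antisymm (by linarith) hε
    rw [hε0, ← h]; simp
  · have h1 := K_ge hε (show 0 < c*y by positivity)
    have h2 := K_ge (show 0 ≤ y - ε by linarith) (show 0 < d*y by positivity)
    have h3 : c*y + d*y = y := by rw [← add_mul, hcd, one_mul]
    linarith

lemma triple_nonneg (c1 c2 c3 y δ ε : ℝ) (hc1 : 0 < c1) (hc2 : 0 < c2) (hc3 : 0 < c3)
    (hcd : c1 + c2 + c3 = 1) (hy : 0 ≤ y) (hδ : 0 ≤ δ) (hε : 0 ≤ ε) (hde : δ + ε ≤ y) :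
    0 ≤ δ * (Real.log δ - Real.log (c1*y)) + ε * (Real.log ε - Real.log (c2*y))
      + (y - δ - ε) * (Real.log (y-δ-ε) - Real.log (c3*y)) := by
  rcases hy.eq_or_lt with h | h
  · have hδ0 : δ = 0 := le_antisymm (by linarith) hδ
    have hε0 : ε = 0 := le_antisymm (by linarith) hε
    rw [hδ0, hε0, ← h]; simp
  · have h1 := K_ge hδ (show 0 < c1*y by positivity)
    have h2 := K_ge hε (show 0 < c2*y by positivity)
    have h3 := K_ge (show 0 ≤ y - δ - ε by linarith) (show 0 < c3*y by positivity)
    have h4 : c1*y + c2*y + c3*y = y := by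
      have : (c1 + c2 + c3)*y = 1*y := by rw [hcd]
      linarith [this]
  -- fix below
    nlinarith [h1, h2, h3, h4]

lemma eq1 (s δ : ℝ) (hs : 0 < s) :
    s*Real.log s - δ*Real.log δ - (s-δ)*Real.log (s-δ)
    = -(δ*(Real.log δ - Real.log (2/5*s)) + (s-δ)*(Real.log (s-δ) - Real.log (3/5*s)))
      + δ*(Real.log 5 - Real.log 2) + (s-δ)*(Real.log 5 - Real.log 3) := by
  have h1 : Real.log (2/5*s) = Real.log 2 - Real.log 5 + Real.log s := by
    rw [Real.log_mul (by norm_num) hs.ne', Real.log_div (by norm_num) (by norm_num)]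
  have h2 : Real.log (3/5*s) = Real.log 3 - Real.log 5 + Real.log s := by
    rw [Real.log_mul (by norm_num) hs.ne', Real.log_div (by norm_num) (by norm_num)]
  rw [h1, h2]; ring

lemma eq2 (y ε : ℝ) (hy : 0 ≤ y) (hε : 0 ≤ ε) (hεy : ε ≤ y) :
    y*Real.log y - ε*Real.log ε - (y-ε)*Real.log (y-ε)
    = -(ε*(Real.log ε - Real.log (2/3*y)) + (y-ε)*(Real.log (y-ε) - Real.log (1/3*y)))
      + ε*(Real.log 3 - Real.log 2) + (y-ε)*Real.log 3 := by
  rcases hy.eq_or_lt with h | h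
  · have hε0 : ε = 0 := le_antisymm (by linarith) hε
    rw [hε0, ← h]; simp
  · have h1 : Real.log (2/3*y) = Real.log 2 - Real.log 3 + Real.log y := by
      rw [Real.log_mul (by norm_num) h.ne', Real.log_div (by norm_num) (by norm_num)]
    have h2 : Real.log (1/3*y) = -Real.log 3 + Real.log y := by
      rw [Real.log_mul (by norm_num) h.ne', one_div, Real.log_inv]
    rw [h1, h2]; ring

lemma eq3 (c δ ε : ℝ) (hc : 0 ≤ c) (hδ : 0 ≤ δ) (hε : 0 ≤ ε) (hde : δ + ε ≤ c) :
    c*Real.log c - δ*Real.log δ - ε*Real.log ε - (c-δ-ε)*Real.log (c-δ-ε)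
    = -(δ*(Real.log δ - Real.log (1/2*c)) + ε*(Real.log ε - Real.log (1/6*c))
        + (c-δ-ε)*(Real.log (c-δ-ε) - Real.log (1/3*c)))
      + δ*Real.log 2 + ε*(Real.log 2 + Real.log 3) + (c-δ-ε)*Real.log 3 := by
  rcases hc.eq_or_lt with h | h
  · have hδ0 : δ = 0 := le_antisymm (by linarith) hδ
    have hε0 : ε = 0 := le_antisymm (by linarith) hε
    rw [hδ0, hε0, ← h]; simp
  · have h1 : Real.log (1/2*c) = -Real.log 2 + Real.log c := by
      rw [Real.log_mul (by norm_num) h.ne', one_div, Real.log_inv]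
    have h2 : Real.log (1/6*c) = -(Real.log 2 + Real.log 3) + Real.log c := by
      rw [Real.log_mul (by norm_num) h.ne', one_div, Real.log_inv,
          show (6:ℝ) = 2*3 by norm_num, Real.log_mul (by norm_num) (by norm_num)]
    have h3 : Real.log (1/3*c) = -Real.log 3 + Real.log c := by
      rw [Real.log_mul (by norm_num) h.ne', one_div, Real.log_inv]
    rw [h1, h2, h3]; ring

set_option maxHeartbeats 4000000 in
lemma key0 (s b δ ε : ℝ) (hs : 1 ≤ s) (hb0 : 0 < b) (hb2 : b ≤ 1)
    (hδ : 0 ≤ δ) (hε : 0 ≤ ε) (hde : δ + ε ≤ 1 - b) (hδx : δ ≤ s) (hεy : ε ≤ s - 1) :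
    (s*Real.log s - δ*Real.log δ - (s-δ)*Real.log (s-δ))
    + ((s-1)*Real.log (s-1) - ε*Real.log ε - (s-1-ε)*Real.log (s-1-ε))
    + ((1-b)*Real.log (1-b) - δ*Real.log δ - ε*Real.log ε
        - (1-b-δ-ε)*Real.log (1-b-δ-ε))
    ≤ s*Real.log 5 - b*Real.log 3 - b^2/(1024*s) := by
  have hs0 : (0:ℝ) < s := by linarith
  have hy : (0:ℝ) ≤ s - 1 := by linarith
  have hc : (0:ℝ) ≤ 1 - b := by linarith
  have hm : (0:ℝ) ≤ 1 - b - δ - ε := by linarith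
  have hδc : δ ≤ 1 - b := by linarith
  have hεc : ε ≤ 1 - b := by linarith
  rw [eq1 s δ hs0, eq2 (s-1) ε hy hε hεy, eq3 (1-b) δ ε hc hδ hε hde]
  have N1 := pair_nonneg (2/5) (3/5) s δ (by norm_num) (by norm_num) (by norm_num) hs0.le hδ hδx
  have N2 := pair_nonneg (2/3) (1/3) (s-1) ε (by norm_num) (by norm_num) (by norm_num) hy hε hεy
  have N3 := triple_nonneg (1/2) (1/6) (1/3) (1-b) δ ε (by norm_num) (by norm_num) (by norm_num)
    (by norm_num) hc hδ hε hde
  have G : b^2/(1024*s) ≤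
      (δ*(Real.log δ - Real.log (2/5*s)) + (s-δ)*(Real.log (s-δ) - Real.log (3/5*s)))
      + (ε*(Real.log ε - Real.log (2/3*(s-1))) + (s-1-ε)*(Real.log (s-1-ε) - Real.log (1/3*(s-1))))
      + (δ*(Real.log δ - Real.log (1/2*(1-b))) + ε*(Real.log ε - Real.log (1/6*(1-b)))
          + (1-b-δ-ε)*(Real.log (1-b-δ-ε) - Real.log (1/3*(1-b)))) := by
    rcases le_or_gt (b/8) (δ - 2/5*s) with h1 | h1
    · have g1 := K_gap (show (0:ℝ) < 2/5*s by positivity) (by linarith)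
        (show δ + 2/5*s ≤ 2*s by linarith)
      have g2 := K_ge (show (0:ℝ) ≤ s - δ by linarith) (show (0:ℝ) < 3/5*s by positivity)
      have hA2 : (b/8)^2 ≤ (δ - 2/5*s)^2 := by
        linarith [mul_nonneg (by linarith : (0:ℝ) ≤ (δ - 2/5*s) - b/8)
          (by linarith : (0:ℝ) ≤ (δ - 2/5*s) + b/8)]
      have h' := mul_le_mul_of_nonneg_right hA2 (show (0:ℝ) ≤ 1024*s by positivity)
      have g3 : b^2/(1024*s) ≤ (δ - 2/5*s)^2/(2*(2*s)) := by
        rw [div_le_div_iff₀ (by positivity) (by positivity)]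
        linarith [h', mul_nonneg (sq_nonneg b) hs0.le]
      linarith [N2, N3]
    rcases le_or_gt (b/8) (2/5*s - δ) with h2 | h2
    · have g1 := K_gap (show (0:ℝ) < 3/5*s by positivity) (show 3/5*s ≤ s - δ by linarith)
        (show (s - δ) + 3/5*s ≤ 2*s by linarith)
      have g2 := K_ge hδ (show (0:ℝ) < 2/5*s by positivity)
      have hA2 : (b/8)^2 ≤ ((s-δ) - 3/5*s)^2 := by
        linarith [mul_nonneg (by linarith : (0:ℝ) ≤ ((s-δ) - 3/5*s) - b/8)
          (by linarith : (0:ℝ) ≤ ((s-δ) - 3/5*s) + b/8)]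
      have h' := mul_le_mul_of_nonneg_right hA2 (show (0:ℝ) ≤ 1024*s by positivity)
      have g3 : b^2/(1024*s) ≤ ((s-δ) - 3/5*s)^2/(2*(2*s)) := by
        rw [div_le_div_iff₀ (by positivity) (by positivity)]
        linarith [h', mul_nonneg (sq_nonneg b) hs0.le]
      linarith [N2, N3]
    rcases le_or_gt (b/8) (δ - 1/2*(1-b)) with h3 | h3
    · have hbp : (0:ℝ) < 1 - b := by
        rcases hc.eq_or_lt with h' | h'
        · exfalso; linarith
        · exact h'
      have g1 := K_gap (show (0:ℝ) < 1/2*(1-b) by positivity) (by linarith)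
        (show δ + 1/2*(1-b) ≤ 2 by linarith)
      have g2 := K_ge hε (show (0:ℝ) < 1/6*(1-b) by positivity)
      have g3 := K_ge hm (show (0:ℝ) < 1/3*(1-b) by positivity)
      have hA2 : (b/8)^2 ≤ (δ - 1/2*(1-b))^2 := by
        linarith [mul_nonneg (by linarith : (0:ℝ) ≤ (δ - 1/2*(1-b)) - b/8)
          (by linarith : (0:ℝ) ≤ (δ - 1/2*(1-b)) + b/8)]
      have h' := mul_le_mul_of_nonneg_right hA2 (show (0:ℝ) ≤ 1024*s by positivity)
      have hbs : b^2 ≤ b^2*s := le_mul_of_one_le_right (sq_nonneg b) hs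
      have g4 : b^2/(1024*s) ≤ (δ - 1/2*(1-b))^2/(2*2) := by
        rw [div_le_div_iff₀ (by positivity) (by norm_num)]
        linarith [h', hbs, mul_nonneg (sq_nonneg b) hs0.le]
      linarith [N1, N2]
    rcases le_or_gt (b/8) (1/2*(1-b) - δ) with h4 | h4
    · have hbp : (0:ℝ) < 1 - b := by
        rcases hc.eq_or_lt with h' | h'
        · exfalso; linarith
        · exact h'
      rcases le_or_gt (b/16) (ε - 1/6*(1-b)) with h5 | h5
      · have g1 := K_gap (show (0:ℝ) < 1/6*(1-b) by positivity) (by linarith)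
          (show ε + 1/6*(1-b) ≤ 2 by linarith)
        have g2 := K_ge hδ (show (0:ℝ) < 1/2*(1-b) by positivity)
        have g3 := K_ge hm (show (0:ℝ) < 1/3*(1-b) by positivity)
        have hA2 : (b/16)^2 ≤ (ε - 1/6*(1-b))^2 := by
          linarith [mul_nonneg (by linarith : (0:ℝ) ≤ (ε - 1/6*(1-b)) - b/16)
            (by linarith : (0:ℝ) ≤ (ε - 1/6*(1-b)) + b/16)]
        have h' := mul_le_mul_of_nonneg_right hA2 (show (0:ℝ) ≤ 1024*s by positivity)
        have hbs : b^2 ≤ b^2*s := le_mul_of_one_le_right (sq_nonneg b) hs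
        have g4 : b^2/(1024*s) ≤ (ε - 1/6*(1-b))^2/(2*2) := by
          rw [div_le_div_iff₀ (by positivity) (by norm_num)]
          linarith [h', hbs, mul_nonneg (sq_nonneg b) hs0.le]
        linarith [N1, N2]
      · have h6 : b/16 ≤ (1-b-δ-ε) - 1/3*(1-b) := by linarith
        have g1 := K_gap (show (0:ℝ) < 1/3*(1-b) by positivity) (by linarith)
          (show (1-b-δ-ε) + 1/3*(1-b) ≤ 2 by linarith)
        have g2 := K_ge hδ (show (0:ℝ) < 1/2*(1-b) by positivity)
        have g3 := K_ge hε (show (0:ℝ) < 1/6*(1-b) by positivity)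
        have hA2 : (b/16)^2 ≤ ((1-b-δ-ε) - 1/3*(1-b))^2 := by
          linarith [mul_nonneg (by linarith : (0:ℝ) ≤ ((1-b-δ-ε) - 1/3*(1-b)) - b/16)
            (by linarith : (0:ℝ) ≤ ((1-b-δ-ε) - 1/3*(1-b)) + b/16)]
        have h' := mul_le_mul_of_nonneg_right hA2 (show (0:ℝ) ≤ 1024*s by positivity)
        have hbs : b^2 ≤ b^2*s := le_mul_of_one_le_right (sq_nonneg b) hs
        have g4 : b^2/(1024*s) ≤ ((1-b-δ-ε) - 1/3*(1-b))^2/(2*2) := by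
          rw [div_le_div_iff₀ (by positivity) (by norm_num)]
          linarith [h', hbs, mul_nonneg (sq_nonneg b) hs0.le]
        linarith [N1, N2]
    rcases le_or_gt (b/8) (ε - 2/3*(s-1)) with h5 | h5
    · have hyp : (0:ℝ) < s - 1 := by
        rcases hy.eq_or_lt with h' | h'
        · exfalso; linarith
        · exact h'
      have g1 := K_gap (show (0:ℝ) < 2/3*(s-1) by positivity) (by linarith)
        (show ε + 2/3*(s-1) ≤ 2*s by linarith)
      have g2 := K_ge (show (0:ℝ) ≤ s-1-ε by linarith) (show (0:ℝ) < 1/3*(s-1) by positivity)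
      have hA2 : (b/8)^2 ≤ (ε - 2/3*(s-1))^2 := by
        linarith [mul_nonneg (by linarith : (0:ℝ) ≤ (ε - 2/3*(s-1)) - b/8)
          (by linarith : (0:ℝ) ≤ (ε - 2/3*(s-1)) + b/8)]
      have h' := mul_le_mul_of_nonneg_right hA2 (show (0:ℝ) ≤ 1024*s by positivity)
      have g3 : b^2/(1024*s) ≤ (ε - 2/3*(s-1))^2/(2*(2*s)) := by
        rw [div_le_div_iff₀ (by positivity) (by positivity)]
        linarith [h', mul_nonneg (sq_nonneg b) hs0.le]
      linarith [N1, N3]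
    rcases le_or_gt (b/8) (2/3*(s-1) - ε) with h6 | h6
    · have hyp : (0:ℝ) < s - 1 := by
        rcases hy.eq_or_lt with h' | h'
        · exfalso; linarith
        · exact h'
      have g1 := K_gap (show (0:ℝ) < 1/3*(s-1) by positivity)
        (show 1/3*(s-1) ≤ s-1-ε by linarith)
        (show (s-1-ε) + 1/3*(s-1) ≤ 2*s by linarith)
      have g2 := K_ge hε (show (0:ℝ) < 2/3*(s-1) by positivity)
      have hA2 : (b/8)^2 ≤ ((s-1-ε) - 1/3*(s-1))^2 := by
        linarith [mul_nonneg (by linarith : (0:ℝ) ≤ ((s-1-ε) - 1/3*(s-1)) - b/8)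
          (by linarith : (0:ℝ) ≤ ((s-1-ε) - 1/3*(s-1)) + b/8)]
      have h' := mul_le_mul_of_nonneg_right hA2 (show (0:ℝ) ≤ 1024*s by positivity)
      have g3 : b^2/(1024*s) ≤ ((s-1-ε) - 1/3*(s-1))^2/(2*(2*s)) := by
        rw [div_le_div_iff₀ (by positivity) (by positivity)]
        linarith [h', mul_nonneg (sq_nonneg b) hs0.le]
      linarith [N1, N3]
    rcases le_or_gt (b/8) (ε - 1/6*(1-b)) with h7 | h7
    · have hbp : (0:ℝ) < 1 - b := by
        rcases hc.eq_or_lt with h' | h'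
        · exfalso; linarith
        · exact h'
      have g1 := K_gap (show (0:ℝ) < 1/6*(1-b) by positivity) (by linarith)
        (show ε + 1/6*(1-b) ≤ 2 by linarith)
      have g2 := K_ge hδ (show (0:ℝ) < 1/2*(1-b) by positivity)
      have g3 := K_ge hm (show (0:ℝ) < 1/3*(1-b) by positivity)
      have hA2 : (b/8)^2 ≤ (ε - 1/6*(1-b))^2 := by
        linarith [mul_nonneg (by linarith : (0:ℝ) ≤ (ε - 1/6*(1-b)) - b/8)
          (by linarith : (0:ℝ) ≤ (ε - 1/6*(1-b)) + b/8)]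
      have h' := mul_le_mul_of_nonneg_right hA2 (show (0:ℝ) ≤ 1024*s by positivity)
      have hbs : b^2 ≤ b^2*s := le_mul_of_one_le_right (sq_nonneg b) hs
      have g4 : b^2/(1024*s) ≤ (ε - 1/6*(1-b))^2/(2*2) := by
        rw [div_le_div_iff₀ (by positivity) (by norm_num)]
        linarith [h', hbs, mul_nonneg (sq_nonneg b) hs0.le]
      linarith [N1, N2]
    rcases le_or_gt (b/8) (1/6*(1-b) - ε) with h8 | h8
    · have hbp : (0:ℝ) < 1 - b := by
        rcases hc.eq_or_lt with h' | h'
        · exfalso; linarith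
        · exact h'
      rcases le_or_gt (b/16) (δ - 1/2*(1-b)) with h9 | h9
      · have g1 := K_gap (show (0:ℝ) < 1/2*(1-b) by positivity) (by linarith)
          (show δ + 1/2*(1-b) ≤ 2 by linarith)
        have g2 := K_ge hε (show (0:ℝ) < 1/6*(1-b) by positivity)
        have g3 := K_ge hm (show (0:ℝ) < 1/3*(1-b) by positivity)
        have hA2 : (b/16)^2 ≤ (δ - 1/2*(1-b))^2 := by
          linarith [mul_nonneg (by linarith : (0:ℝ) ≤ (δ - 1/2*(1-b)) - b/16)
            (by linarith : (0:ℝ) ≤ (δ - 1/2*(1-b)) + b/16)]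
        have h' := mul_le_mul_of_nonneg_right hA2 (show (0:ℝ) ≤ 1024*s by positivity)
        have hbs : b^2 ≤ b^2*s := le_mul_of_one_le_right (sq_nonneg b) hs
        have g4 : b^2/(1024*s) ≤ (δ - 1/2*(1-b))^2/(2*2) := by
          rw [div_le_div_iff₀ (by positivity) (by norm_num)]
          linarith [h', hbs, mul_nonneg (sq_nonneg b) hs0.le]
        linarith [N1, N2]
      · have h10 : b/16 ≤ (1-b-δ-ε) - 1/3*(1-b) := by linarith
        have g1 := K_gap (show (0:ℝ) < 1/3*(1-b) by positivity) (by linarith)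
          (show (1-b-δ-ε) + 1/3*(1-b) ≤ 2 by linarith)
        have g2 := K_ge hδ (show (0:ℝ) < 1/2*(1-b) by positivity)
        have g3 := K_ge hε (show (0:ℝ) < 1/6*(1-b) by positivity)
        have hA2 : (b/16)^2 ≤ ((1-b-δ-ε) - 1/3*(1-b))^2 := by
          linarith [mul_nonneg (by linarith : (0:ℝ) ≤ ((1-b-δ-ε) - 1/3*(1-b)) - b/16)
            (by linarith : (0:ℝ) ≤ ((1-b-δ-ε) - 1/3*(1-b)) + b/16)]
        have h' := mul_le_mul_of_nonneg_right hA2 (show (0:ℝ) ≤ 1024*s by positivity)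
        have hbs : b^2 ≤ b^2*s := le_mul_of_one_le_right (sq_nonneg b) hs
        have g4 : b^2/(1024*s) ≤ ((1-b-δ-ε) - 1/3*(1-b))^2/(2*2) := by
          rw [div_le_div_iff₀ (by positivity) (by norm_num)]
          linarith [h', hbs, mul_nonneg (sq_nonneg b) hs0.le]
        linarith [N1, N2]
    · exfalso
      linarith
  linarith [N1, N2, N3, G]

lemma log95 : Real.log (9/5) = 2*Real.log 3 - Real.log 5 := by
  rw [show (9:ℝ)/5 = 3^2/5 by norm_num, Real.log_div (by norm_num) (by norm_num), Real.log_pow]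
  push_cast; ring

lemma kappa_le (ν b : ℝ) (hν : 1 ≤ ν) (hb1 : 2/(ν+1) ≤ b) (hb2 : b ≤ 1) :
    kappa (b*ν) (1-b) ≤ 1/2*Real.log 5 - 1/(2*ν)*Real.log (9/5) - 1/(512*ν*(ν+1)) := by
  have hν0 : (0:ℝ) < ν := by linarith
  have hν1 : (0:ℝ) < ν + 1 := by linarith
  have hb0 : (0:ℝ) < b := lt_of_lt_of_le (by positivity) hb1
  have hsb : 2 ≤ b*(ν+1) := by
    rw [div_le_iff₀ hν1] at hb1; linarith
  have ha : (0:ℝ) < b*ν := by positivity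
  have hs1 : 1 ≤ b*(ν+1)/2 := by linarith
  have hzero : ((0:ℝ),(0:ℝ)) ∈ Dab (b*ν) (1-b) := by
    refine ⟨le_refl 0, le_refl 0, by simp; linarith, ?_, ?_⟩
    · show (0:ℝ) ≤ (b*ν + 1 - (1-b))/2
      nlinarith
    · show (0:ℝ) ≤ (b*ν - 1 - (1-b))/2
      nlinarith
  have hne : (fab (b*ν) (1-b) '' Dab (b*ν) (1-b)).Nonempty :=
    ⟨_, Set.mem_image_of_mem _ hzero⟩
  have hub : ∀ r ∈ fab (b*ν) (1-b) '' Dab (b*ν) (1-b),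
      r ≤ b*(ν+1)/2*Real.log 5 - b*Real.log 3 - b^2/(1024*(b*(ν+1)/2)) := by
    rintro r ⟨⟨δ, ε⟩, ⟨m1, m2, m3, m4, m5⟩, rfl⟩
    simp only at m1 m2 m3 m4 m5
    have hx : (b*ν + 1 - (1-b))/2 = b*(ν+1)/2 := by ring
    have hy : (b*ν - 1 - (1-b))/2 = b*(ν+1)/2 - 1 := by ring
    have hkey := key0 (b*(ν+1)/2) b δ ε hs1 hb0 hb2 m1 m2 m3
      (by rw [hx] at m4; exact m4) (by rw [hy] at m5; exact m5)
    have hfab : fab (b*ν) (1-b) (δ, ε) =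
      (b*(ν+1)/2*Real.log (b*(ν+1)/2) - δ*Real.log δ
        - (b*(ν+1)/2-δ)*Real.log (b*(ν+1)/2-δ))
      + ((b*(ν+1)/2-1)*Real.log (b*(ν+1)/2-1) - ε*Real.log ε
        - (b*(ν+1)/2-1-ε)*Real.log (b*(ν+1)/2-1-ε))
      + ((1-b)*Real.log (1-b) - δ*Real.log δ - ε*Real.log ε
        - (1-b-δ-ε)*Real.log (1-b-δ-ε)) := by
      simp only [fab]
      rw [hx, hy]
      ring
    rw [hfab]
    exact hkey
  have hsup := csSup_le hne hub
  have hkap : kappa (b*ν) (1-b) = 1/(b*ν) * sSup (fab (b*ν) (1-b) '' Dab (b*ν) (1-b)) := rfl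
  rw [hkap]
  calc 1/(b*ν) * sSup (fab (b*ν) (1-b) '' Dab (b*ν) (1-b))
      ≤ 1/(b*ν) * (b*(ν+1)/2*Real.log 5 - b*Real.log 3 - b^2/(1024*(b*(ν+1)/2))) :=
        mul_le_mul_of_nonneg_left hsup (by positivity)
    _ = 1/2*Real.log 5 - 1/(2*ν)*Real.log (9/5) - 1/(512*ν*(ν+1)) := by
        rw [log95]
        field_simp
        ring

lemma fnu_le (ν : ℝ) (hν : 1 ≤ ν) :
    fnu ν ≤ 1/2*Real.log 5 - 1/(2*ν)*Real.log (9/5) - 1/(512*ν*(ν+1)) := by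
  apply csSup_le
  · refine ⟨kappa (1*ν) (1-1), ⟨1, ⟨?_, le_refl 1⟩, rfl⟩⟩
    rw [div_le_one (by linarith)]; linarith
  · rintro r ⟨b, ⟨hb1, hb2⟩, rfl⟩
    exact kappa_le ν b hν hb1 hb2

/-- `g(ν) > (1/2) log(9/5)` for every `ν ≥ 1`. -/
theorem stmt12 (ν : ℝ) (hν : 1 ≤ ν) : (1 / 2) * Real.log (9 / 5) < gnu ν := by
  have hν0 : (0:ℝ) < ν := by linarith
  have h := fnu_le ν hν
  have h2 : gnu ν ≥ ν * ((1/2)*Real.log 5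
      - (1/2*Real.log 5 - 1/(2*ν)*Real.log (9/5) - 1/(512*ν*(ν+1)))) := by
    unfold gnu
    apply mul_le_mul_of_nonneg_left _ hν0.le
    linarith
  have h3 : ν * ((1/2)*Real.log 5
      - (1/2*Real.log 5 - 1/(2*ν)*Real.log (9/5) - 1/(512*ν*(ν+1))))
      = (1/2)*Real.log (9/5) + 1/(512*(ν+1)) := by
    field_simp
    ring
  have h4 : (0:ℝ) < 1/(512*(ν+1)) := by positivity
  linarith
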